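/- Let m ≥ 2, n = 2^m − 1, and let Z ⊆ {0,1}^n be a code of size N = 2^{n−m} whose dual distance distribution satisfies A^⊥_{(n+1)/2} = n and A^⊥_i = 0 for every i ∈ {1,…,n} with i ≠ (n+1)/2 (this holds for the Hamming code of length n). Then the quadratic discrepancy equals D^{L2}(Z) = (n/2^n)·C(n−1, (n−1)/2). -/

import Mathlib

/-- The quadratic discrepancy of a code `Z ⊆ {0,1}^n`. -/
noncomputable def disc (n : ℕ) (Z : Finset (Fin n → Bool)) : ℝ :=
  ∑ t ∈ Finset.range (n + 1), ∑ x : Fin n → Bool,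
    ((Z.card : ℝ)⁻¹ * ((Z.filter (fun z => hammingDist x z ≤ t)).card : ℝ)
      - ((2 : ℝ) ^ n)⁻¹ *
          ((Finset.univ.filter (fun z : Fin n → Bool => hammingDist x z ≤ t)).card : ℝ)) ^ 2

/-- The distance distribution `A_w = (1/N)·|{(z,z') ∈ Z×Z : d(z,z') = w}|` of a code. -/
noncomputable def distDistr (n : ℕ) (Z : Finset (Fin n → Bool)) (w : ℕ) : ℝ :=
  (Z.card : ℝ)⁻¹ * (((Z ×ˢ Z).filter (fun p => hammingDist p.1 p.2 = w)).card : ℝ)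

/-- The Krawtchouk polynomial `K_k^{(n)}(x) = Σ_{i=0}^k (−1)^i·C(x,i)·C(n−x,k−i)`. -/
def kraw (n k x : ℕ) : ℤ :=
  ∑ i ∈ Finset.range (k + 1),
    (-1 : ℤ) ^ i * (Nat.choose x i : ℤ) * (Nat.choose (n - x) (k - i) : ℤ)

/-- The dual distance distribution `A_w^⊥ = (1/N)·Σ_{i=0}^n K_w^{(n)}(i)·A_i` of a code. -/
noncomputable def dualDistDistr (n : ℕ) (Z : Finset (Fin n → Bool)) (w : ℕ) : ℝ :=
  (Z.card : ℝ)⁻¹ * ∑ i ∈ Finset.range (n + 1), (kraw n w i : ℝ) * distDistr n Z i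

section AuxDisc
open Finset Polynomial

variable {n : ℕ}

def wtB {n : ℕ} (x : Fin n → Bool) : ℕ := (Finset.univ.filter (fun i => x i = true)).card

def chZ {n : ℕ} (S x : Fin n → Bool) : ℤ := ∏ i, if S i && x i then -1 else 1

def bxor {n : ℕ} (x y : Fin n → Bool) : Fin n → Bool := fun i => xor (x i) (y i)

lemma chZ_comm (S x : Fin n → Bool) : chZ S x = chZ x S := by
  unfold chZ; apply Finset.prod_congr rfl; intro i _; rw [Bool.and_comm]

lemma chZ_xor (S x y : Fin n → Bool) : chZ S (bxor x y) = chZ S x * chZ S y := by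
  unfold chZ bxor
  rw [← Finset.prod_mul_distrib]
  apply Finset.prod_congr rfl; intro i _
  cases S i <;> cases x i <;> cases y i <;> norm_num

lemma bxor_bxor (x y : Fin n → Bool) : bxor (bxor x y) y = x := by
  funext i; simp [bxor, Bool.xor_assoc]

lemma bxor_eq_zero_iff (x y : Fin n → Bool) : bxor x y = (fun _ => false) ↔ x = y := by
  constructor
  · intro h; funext i
    have := congrFun h i
    cases hx : x i <;> cases hy : y i <;> simp [bxor, hx, hy] at this ⊢
  · intro h; subst h; funext i; simp [bxor]

lemma hammingDist_eq_wt (x z : Fin n → Bool) : hammingDist x z = wtB (bxor x z) := by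
  unfold wtB bxor
  rw [hammingDist]
  congr 1
  apply Finset.filter_congr
  intro i _
  cases hx : x i <;> cases hz : z i <;> simp [hx, hz]

lemma sum_chZ (S : Fin n → Bool) :
    ∑ x : Fin n → Bool, chZ S x = if S = (fun _ => false) then 2 ^ n else 0 := by
  unfold chZ
  rw [← Fintype.piFinset_univ, ← Finset.prod_univ_sum (fun _ => (univ : Finset Bool))
    (fun i b => if S i && b then (-1 : ℤ) else 1)]
  by_cases h : S = fun _ => false
  · subst h; simp
  · rw [if_neg h]
    obtain ⟨i, hi⟩ : ∃ i, S i = true := by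
      by_contra hc; push_neg at hc; exact h (funext fun i => by simpa using hc i)
    apply Finset.prod_eq_zero (Finset.mem_univ i)
    simp [hi]

lemma wtB_le (x : Fin n → Bool) : wtB x ≤ n := by
  have := Finset.card_filter_le (univ : Finset (Fin n)) (fun i => x i = true)
  simpa [wtB] using this

lemma coeff_one_sub_X_pow (w k : ℕ) :
    ((1 - X : Polynomial ℤ) ^ w).coeff k = (-1) ^ k * (Nat.choose w k : ℤ) := by
  have h1 : (1 - X : Polynomial ℤ) ^ w = C ((-1 : ℤ)^w) * (X + C (-1)) ^ w := by
    rw [map_pow, ← mul_pow]; congr 1; simp [map_neg]; ring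
  rw [h1, coeff_C_mul, coeff_X_add_C_pow]
  rcases le_or_gt k w with h | h
  · have h2 : w + (w - k) = 2 * (w - k) + k := by omega
    rw [← mul_assoc, ← pow_add, h2, pow_add, pow_mul]
    simp
  · rw [Nat.choose_eq_zero_of_lt h]; simp

lemma polyB (S : Fin n → Bool) :
    ∑ y : Fin n → Bool, C (chZ S y) * X ^ (wtB y)
      = (1 - X : Polynomial ℤ) ^ (wtB S) * (1 + X) ^ (n - wtB S) := by
  have key : ∀ y : Fin n → Bool, C (chZ S y) * X ^ (wtB y)
      = ∏ i, ((if S i && y i then C (-1 : ℤ) else 1) * X ^ (if y i then 1 else 0)) := by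
    intro y
    rw [Finset.prod_mul_distrib]
    congr 1
    · rw [chZ, map_prod]
      apply Finset.prod_congr rfl; intro i _
      split <;> simp
    · rw [wtB, Finset.card_filter, ← Finset.prod_pow_eq_pow_sum]
  calc ∑ y : Fin n → Bool, C (chZ S y) * X ^ (wtB y)
      = ∑ y : Fin n → Bool, ∏ i, ((if S i && y i then C (-1 : ℤ) else 1) * X ^ (if y i then 1 else 0)) := by
        exact Finset.sum_congr rfl fun y _ => key y
    _ = ∏ i, ∑ b : Bool, ((if S i && b then C (-1 : ℤ) else 1) * X ^ (if b then 1 else 0)) := by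
        rw [Finset.prod_univ_sum, Fintype.piFinset_univ]
    _ = ∏ i, (if S i then 1 - X else 1 + X) := by
        apply Finset.prod_congr rfl; intro i _
        cases S i <;> simp [Fintype.sum_bool] <;> ring
    _ = (1 - X : Polynomial ℤ) ^ (wtB S) * (1 + X) ^ (n - wtB S) := by
        rw [Finset.prod_ite (fun _ => (1 - X : Polynomial ℤ)) (fun _ => (1 + X : Polynomial ℤ)),
          Finset.prod_const, Finset.prod_const]
        have hc : #(Finset.filter (fun i => ¬ S i = true) univ) = n - wtB S := by
          have := Finset.card_filter_add_card_filter_not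
            (s := (univ : Finset (Fin n))) (p := fun i => S i = true)
          rw [Finset.card_univ, Fintype.card_fin] at this
          unfold wtB; omega
        rw [hc]; rfl

lemma krawA (k w : ℕ) :
    kraw n k w = ((1 - X : Polynomial ℤ) ^ w * (1 + X) ^ (n - w)).coeff k := by
  rw [coeff_mul, Finset.Nat.sum_antidiagonal_eq_sum_range_succ_mk, kraw]
  apply Finset.sum_congr rfl
  intro i _
  rw [coeff_one_sub_X_pow, coeff_one_add_X_pow]

lemma sum_wt_chZ (S : Fin n → Bool) (i : ℕ) :
    ∑ y ∈ Finset.univ.filter (fun y : Fin n → Bool => wtB y = i), chZ S y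
      = kraw n i (wtB S) := by
  rw [krawA (n := n), ← polyB, Polynomial.finset_sum_coeff]
  rw [Finset.sum_filter]
  apply Finset.sum_congr rfl
  intro y _
  rw [coeff_C_mul, coeff_X_pow]
  by_cases h : wtB y = i
  · simp [h]
  · simp [Ne.symm h]
    exact fun hc => absurd hc h

lemma sum_chZ' (S : Fin n → Bool) :
    ∑ x : Fin n → Bool, chZ x S = if S = (fun _ => false) then 2 ^ n else 0 := by
  rw [← sum_chZ]; exact Finset.sum_congr rfl fun x _ => chZ_comm x S

lemma orth2 (S S' : Fin n → Bool) :
    ∑ x : Fin n → Bool, chZ S x * chZ S' x = if S = S' then 2 ^ n else 0 := by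
  have h : ∀ x, chZ S x * chZ S' x = chZ (bxor S S') x := by
    intro x
    rw [chZ_comm S x, chZ_comm S' x, ← chZ_xor, chZ_comm]
  rw [Finset.sum_congr rfl fun x _ => h x, sum_chZ]
  by_cases hss : S = S'
  · rw [if_pos ((bxor_eq_zero_iff S S').mpr hss), if_pos hss]
  · rw [if_neg (fun hc => hss ((bxor_eq_zero_iff S S').mp hc)), if_neg hss]

def Gk (n t w : ℕ) : ℤ := ∑ i ∈ Finset.range (t + 1), kraw n i w

lemma indicatorZ (x z : Fin n → Bool) (t : ℕ) :
    (if hammingDist x z ≤ t then (2 ^ n : ℤ) else 0)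
      = ∑ S : Fin n → Bool, Gk n t (wtB S) * (chZ S x * chZ S z) := by
  have hxz : ∀ S : Fin n → Bool, chZ S x * chZ S z = chZ S (bxor x z) := fun S => (chZ_xor S x z).symm
  set u := bxor x z with hu
  symm
  calc ∑ S : Fin n → Bool, Gk n t (wtB S) * (chZ S x * chZ S z)
      = ∑ S : Fin n → Bool, ∑ i ∈ Finset.range (t+1), kraw n i (wtB S) * chZ S u := by
        apply Finset.sum_congr rfl; intro S _
        rw [hxz, Gk, Finset.sum_mul]
    _ = ∑ i ∈ Finset.range (t+1), ∑ S : Fin n → Bool, kraw n i (wtB S) * chZ S u :=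
        Finset.sum_comm
    _ = ∑ i ∈ Finset.range (t+1), (if i = wtB u then (2:ℤ)^n else 0) := by
        apply Finset.sum_congr rfl; intro i _
        calc ∑ S : Fin n → Bool, kraw n i (wtB S) * chZ S u
            = ∑ S : Fin n → Bool, ∑ y ∈ Finset.univ.filter (fun y : Fin n → Bool => wtB y = i),
                chZ S y * chZ S u := by
              apply Finset.sum_congr rfl; intro S _
              rw [← sum_wt_chZ, Finset.sum_mul]
          _ = ∑ y ∈ Finset.univ.filter (fun y : Fin n → Bool => wtB y = i),
                ∑ S : Fin n → Bool, chZ S y * chZ S u := Finset.sum_comm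
          _ = ∑ y ∈ Finset.univ.filter (fun y : Fin n → Bool => wtB y = i),
                (if y = u then (2:ℤ)^n else 0) := by
              apply Finset.sum_congr rfl; intro y _
              have h1 : ∀ S : Fin n → Bool, chZ S y * chZ S u = chZ (bxor y u) S := by
                intro S
                rw [← chZ_xor]; exact chZ_comm _ _
              rw [Finset.sum_congr rfl fun S _ => h1 S, sum_chZ]
              by_cases hyu : y = u
              · rw [if_pos ((bxor_eq_zero_iff y u).mpr hyu), if_pos hyu]
              · rw [if_neg (fun hc => hyu ((bxor_eq_zero_iff y u).mp hc)), if_neg hyu]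
          _ = (if i = wtB u then (2:ℤ)^n else 0) := by
              rw [Finset.sum_ite_eq' (Finset.univ.filter (fun y : Fin n → Bool => wtB y = i)) u
                (fun _ => (2:ℤ)^n)]
              simp [eq_comm]
    _ = (if hammingDist x z ≤ t then (2 ^ n : ℤ) else 0) := by
        rw [Finset.sum_ite_eq' (Finset.range (t+1)) (wtB u) (fun _ => (2:ℤ)^n)]
        rw [hammingDist_eq_wt, ← hu]
        simp [Nat.lt_succ_iff]

lemma parseval (a : (Fin n → Bool) → ℝ) :
    ∑ x : Fin n → Bool, (∑ S : Fin n → Bool, a S * (chZ S x : ℝ)) ^ 2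
      = 2 ^ n * ∑ S : Fin n → Bool, (a S) ^ 2 := by
  have key : ∀ S S' : Fin n → Bool,
      ∑ x : Fin n → Bool, (chZ S x : ℝ) * (chZ S' x : ℝ) = if S = S' then 2 ^ n else 0 := by
    intro S S'
    have h0 := orth2 S S'
    have h2 : ((∑ x : Fin n → Bool, chZ S x * chZ S' x : ℤ) : ℝ)
        = ∑ x : Fin n → Bool, (chZ S x : ℝ) * (chZ S' x : ℝ) := by push_cast; ring_nf
    rw [← h2, h0]
    split <;> norm_num
  calc ∑ x : Fin n → Bool, (∑ S : Fin n → Bool, a S * (chZ S x : ℝ)) ^ 2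
      = ∑ x : Fin n → Bool, ∑ S : Fin n → Bool, ∑ S' : Fin n → Bool,
          (a S * a S') * ((chZ S x : ℝ) * (chZ S' x : ℝ)) := by
        apply Finset.sum_congr rfl; intro x _
        rw [sq, Finset.sum_mul_sum]
        apply Finset.sum_congr rfl; intro S _
        apply Finset.sum_congr rfl; intro S' _
        ring
    _ = ∑ S : Fin n → Bool, ∑ S' : Fin n → Bool, (a S * a S') *
          ∑ x : Fin n → Bool, ((chZ S x : ℝ) * (chZ S' x : ℝ)) := by
        rw [Finset.sum_comm]
        apply Finset.sum_congr rfl; intro S _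
        rw [Finset.sum_comm]
        apply Finset.sum_congr rfl; intro S' _
        rw [Finset.mul_sum]
    _ = ∑ S : Fin n → Bool, ∑ S' : Fin n → Bool, (a S * a S') *
          (if S = S' then (2:ℝ) ^ n else 0) := by
        apply Finset.sum_congr rfl; intro S _
        apply Finset.sum_congr rfl; intro S' _
        rw [key]
    _ = 2 ^ n * ∑ S : Fin n → Bool, (a S) ^ 2 := by
        rw [Finset.mul_sum]
        apply Finset.sum_congr rfl; intro S _
        simp only [mul_ite, mul_zero]
        rw [Finset.sum_ite_eq]
        simp [sq]
        ring

def sigmaZ {n : ℕ} (W : Finset (Fin n → Bool)) (S : Fin n → Bool) : ℤ := ∑ z ∈ W, chZ S z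

lemma card_ballZ (W : Finset (Fin n → Bool)) (x : Fin n → Bool) (t : ℕ) :
    (2 ^ n : ℤ) * ((W.filter (fun z => hammingDist x z ≤ t)).card : ℤ)
      = ∑ S : Fin n → Bool, Gk n t (wtB S) * chZ S x * sigmaZ W S := by
  calc (2 ^ n : ℤ) * ((W.filter (fun z => hammingDist x z ≤ t)).card : ℤ)
      = ∑ z ∈ W, (if hammingDist x z ≤ t then (2 ^ n : ℤ) else 0) := by
        rw [Finset.card_filter]
        push_cast
        rw [Finset.mul_sum]
        apply Finset.sum_congr rfl; intro z _
        split <;> simp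
    _ = ∑ z ∈ W, ∑ S : Fin n → Bool, Gk n t (wtB S) * (chZ S x * chZ S z) := by
        exact Finset.sum_congr rfl fun z _ => indicatorZ x z t
    _ = ∑ S : Fin n → Bool, ∑ z ∈ W, Gk n t (wtB S) * (chZ S x * chZ S z) := Finset.sum_comm
    _ = ∑ S : Fin n → Bool, Gk n t (wtB S) * chZ S x * sigmaZ W S := by
        apply Finset.sum_congr rfl; intro S _
        rw [sigmaZ, Finset.mul_sum]
        apply Finset.sum_congr rfl; intro z _
        ring

lemma card_ballR (W : Finset (Fin n → Bool)) (x : Fin n → Bool) (t : ℕ) :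
    (((W.filter (fun z => hammingDist x z ≤ t)).card : ℝ))
      = ((2:ℝ) ^ n)⁻¹ * ∑ S : Fin n → Bool, (Gk n t (wtB S) : ℝ) * (chZ S x : ℝ) * (sigmaZ W S : ℝ) := by
  have h := card_ballZ (n := n) W x t
  have h2 : ((2:ℝ)^n) ≠ 0 := by positivity
  have hr : (2:ℝ)^n * ((W.filter (fun z => hammingDist x z ≤ t)).card : ℝ)
      = ∑ S : Fin n → Bool, (Gk n t (wtB S) : ℝ) * (chZ S x : ℝ) * (sigmaZ W S : ℝ) := by
    exact_mod_cast congrArg (Int.cast : ℤ → ℝ) h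
  rw [← hr]
  field_simp

lemma chZ_zero_left (x : Fin n → Bool) : chZ (fun _ => false) x = 1 := by
  unfold chZ; simp

lemma sigmaZ_zero (W : Finset (Fin n → Bool)) : sigmaZ W (fun _ => false) = W.card := by
  unfold sigmaZ
  rw [Finset.sum_congr rfl fun z _ => chZ_zero_left z]
  simp

lemma sigmaZ_univ (S : Fin n → Bool) :
    sigmaZ Finset.univ S = if S = (fun _ => false) then 2 ^ n else 0 := sum_chZ S

lemma wtB_eq_zero_iff (S : Fin n → Bool) : wtB S = 0 ↔ S = (fun _ => false) := by
  unfold wtB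
  rw [Finset.card_eq_zero, Finset.filter_eq_empty_iff]
  constructor
  · intro h; funext i; simpa using h (Finset.mem_univ i)
  · intro h i _; rw [h]; simp

/-- dual distance distribution in terms of character sums -/
lemma dual_sigmaZ (Z : Finset (Fin n → Bool)) (w : ℕ) :
    ∑ i ∈ Finset.range (n+1),
        kraw n w i * (((Z ×ˢ Z).filter (fun p => hammingDist p.1 p.2 = i)).card : ℤ)
      = ∑ S ∈ Finset.univ.filter (fun S : Fin n → Bool => wtB S = w), (sigmaZ Z S) ^ 2 := by
  calc ∑ i ∈ Finset.range (n+1),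
        kraw n w i * (((Z ×ˢ Z).filter (fun p => hammingDist p.1 p.2 = i)).card : ℤ)
      = ∑ i ∈ Finset.range (n+1), ∑ p ∈ Z ×ˢ Z,
          (if hammingDist p.1 p.2 = i then kraw n w i else 0) := by
        apply Finset.sum_congr rfl; intro i _
        rw [Finset.card_filter]
        push_cast
        rw [Finset.mul_sum]
        apply Finset.sum_congr rfl; intro p _
        split <;> simp
    _ = ∑ p ∈ Z ×ˢ Z, ∑ i ∈ Finset.range (n+1),
          (if i = hammingDist p.1 p.2 then kraw n w i else 0) := by
        rw [Finset.sum_comm]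
        apply Finset.sum_congr rfl; intro p _
        apply Finset.sum_congr rfl; intro i _
        congr 1
        exact propext ⟨fun h => h.symm, fun h => h.symm⟩
    _ = ∑ p ∈ Z ×ˢ Z, kraw n w (hammingDist p.1 p.2) := by
        apply Finset.sum_congr rfl; intro p _
        rw [Finset.sum_ite_eq' (Finset.range (n+1)) (hammingDist p.1 p.2) (fun i => kraw n w i)]
        rw [if_pos]
        rw [Finset.mem_range, Nat.lt_succ_iff]
        have := hammingDist_le_card_fintype (x := p.1) (y := p.2)
        simpa using this
    _ = ∑ p ∈ Z ×ˢ Z, ∑ S ∈ Finset.univ.filter (fun S : Fin n → Bool => wtB S = w),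
          chZ S p.1 * chZ S p.2 := by
        apply Finset.sum_congr rfl; intro p _
        rw [hammingDist_eq_wt, ← sum_wt_chZ (bxor p.1 p.2) w]
        apply Finset.sum_congr rfl; intro S _
        rw [chZ_comm, chZ_xor]
    _ = ∑ S ∈ Finset.univ.filter (fun S : Fin n → Bool => wtB S = w), (sigmaZ Z S) ^ 2 := by
        rw [Finset.sum_comm]
        apply Finset.sum_congr rfl; intro S _
        rw [sq, sigmaZ, Finset.sum_mul_sum, Finset.sum_product]

lemma sum_coeff_one_sub_X_mul (Q : Polynomial ℤ) (t : ℕ) :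
    ∑ i ∈ Finset.range (t+1), ((1 - X) * Q).coeff i = Q.coeff t := by
  induction t with
  | zero => simp [Polynomial.mul_coeff_zero]
  | succ t ih =>
      rw [Finset.sum_range_succ, ih]
      have : ((1 - X : Polynomial ℤ) * Q) = Q - X * Q := by ring
      rw [this, Polynomial.coeff_sub, Polynomial.coeff_X_mul]
      ring

lemma Gk_coeff (t w : ℕ) (hw : 1 ≤ w) :
    Gk n t w = (((1 - X : Polynomial ℤ)) ^ (w-1) * (1 + X) ^ (n-w)).coeff t := by
  unfold Gk
  have hP : ∀ i, kraw n i w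
      = ((1-X) * ((1-X:Polynomial ℤ)^(w-1) * (1+X)^(n-w))).coeff i := by
    intro i
    rw [krawA]
    congr 1
    rw [← mul_assoc, ← pow_succ']
    congr 2
    omega
  rw [Finset.sum_congr rfl fun i _ => hP i, sum_coeff_one_sub_X_mul]

lemma coeff_one_sub_X_sq_pow (M t : ℕ) :
    ((1 - X^2 : Polynomial ℤ) ^ M).coeff t
      = ∑ s ∈ Finset.range (M+1),
          (-1)^s * (Nat.choose M s : ℤ) * (if t = 2*s then 1 else 0) := by
  have h1 : (1 - X^2 : Polynomial ℤ) = -X^2 + 1 := by ring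
  rw [h1, add_pow, Polynomial.finset_sum_coeff]
  apply Finset.sum_congr rfl
  intro s _
  have hterm : ((-X^2 : Polynomial ℤ))^s * 1^(M-s) * (Nat.choose M s : Polynomial ℤ)
      = Polynomial.C ((-1)^s * (Nat.choose M s : ℤ)) * X^(2*s) := by
    rw [one_pow, mul_one, neg_pow, ← pow_mul, map_mul, map_pow, map_neg, map_one,
      Polynomial.C_eq_natCast]
    ring
  rw [hterm, Polynomial.coeff_C_mul, Polynomial.coeff_X_pow]

lemma middle_sq_sum (M : ℕ) (hn2 : n = 2*M + 1) :
    ∑ t ∈ Finset.range (n+1), (Gk n t (M+1))^2 = ((2*M).choose M : ℤ) := by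
  have hG : ∀ t, Gk n t (M+1) = ((1 - X^2 : Polynomial ℤ) ^ M).coeff t := by
    intro t
    rw [Gk_coeff t (M+1) (by omega)]
    congr 1
    have e1 : M + 1 - 1 = M := by omega
    have e2 : n - (M+1) = M := by omega
    rw [e1, e2, ← mul_pow]
    congr 1
    ring
  have hceven : ∀ s, s ≤ M →
      ((1 - X^2 : Polynomial ℤ) ^ M).coeff (2*s) = (-1)^s * (Nat.choose M s : ℤ) := by
    intro s hs
    rw [coeff_one_sub_X_sq_pow]
    have h : ∀ s' ∈ Finset.range (M+1),
        (-1:ℤ)^s' * (Nat.choose M s' : ℤ) * (if 2*s = 2*s' then 1 else 0)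
          = (if s' = s then (-1:ℤ)^s' * (Nat.choose M s' : ℤ) else 0) := by
      intro s' _
      by_cases h : s' = s
      · subst h; simp
      · rw [if_neg (by omega), if_neg h, mul_zero]
    rw [Finset.sum_congr rfl h, Finset.sum_ite_eq' (Finset.range (M+1)) s]
    rw [if_pos (Finset.mem_range.mpr (by omega))]
  have hcodd : ∀ t, ¬ (∃ s, s ≤ M ∧ t = 2*s) →
      ((1 - X^2 : Polynomial ℤ) ^ M).coeff t = 0 := by
    intro t ht
    rw [coeff_one_sub_X_sq_pow]
    apply Finset.sum_eq_zero
    intro s hs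
    rw [Finset.mem_range] at hs
    rw [if_neg (fun h => ht ⟨s, by omega, h⟩), mul_zero]
  have hsub : (Finset.range (M+1)).image (fun s => 2*s) ⊆ Finset.range (n+1) := by
    intro t ht
    rw [Finset.mem_image] at ht
    obtain ⟨s, hs, rfl⟩ := ht
    rw [Finset.mem_range] at hs ⊢
    omega
  have hvanish : ∀ t ∈ Finset.range (n+1),
      t ∉ (Finset.range (M+1)).image (fun s => 2*s) → (Gk n t (M+1))^2 = 0 := by
    intro t ht hnt
    rw [hG, hcodd t, sq, mul_zero]
    rintro ⟨s, hs, rfl⟩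
    exact hnt (Finset.mem_image.mpr ⟨s, Finset.mem_range.mpr (by omega), rfl⟩)
  rw [← Finset.sum_subset hsub hvanish]
  rw [Finset.sum_image (fun a _ b _ h => by omega)]
  have hval : ∀ s ∈ Finset.range (M+1), (Gk n (2*s) (M+1))^2 = ((Nat.choose M s : ℤ))^2 := by
    intro s hs
    rw [Finset.mem_range] at hs
    rw [hG, hceven s (by omega), mul_pow, ← pow_mul, mul_comm s 2, pow_mul, neg_one_sq,
      one_pow, one_mul]
  rw [Finset.sum_congr rfl hval]
  have hv := Nat.add_choose_eq M M M
  rw [Finset.Nat.sum_antidiagonal_eq_sum_range_succ_mk] at hv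
  have hsymm : ∀ k ∈ Finset.range (M+1), Nat.choose M (k, M-k).1 * Nat.choose M (k, M-k).2
      = Nat.choose M k * Nat.choose M k := by
    intro k hk
    rw [Finset.mem_range] at hk
    simp only
    rw [Nat.choose_symm (by omega)]
  rw [Finset.sum_congr rfl hsymm] at hv
  have h2M : (2*M).choose M = ∑ k ∈ Finset.range (M+1), M.choose k * M.choose k := by
    rw [two_mul]; exact hv
  rw [h2M]
  push_cast
  apply Finset.sum_congr rfl
  intro k _
  ring

end AuxDisc

/-- For `m ≥ 2`, `n = 2^m − 1`, a code `Z ⊆ {0,1}^n` of size `N = 2^{n−m}` whose dual distance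
distribution satisfies `A^⊥_{(n+1)/2} = n` and `A^⊥_i = 0` for `1 ≤ i ≤ n`, `i ≠ (n+1)/2`
(e.g. the Hamming code) has quadratic discrepancy `D^{L2}(Z) = (n/2^n)·C(n−1,(n−1)/2)`. -/
theorem discrepancy_hamming_code (m n : ℕ) (hm : 2 ≤ m) (hn : n = 2 ^ m - 1)
    (Z : Finset (Fin n → Bool)) (hN : Z.card = 2 ^ (n - m))
    (hdual1 : dualDistDistr n Z ((n + 1) / 2) = (n : ℝ))
    (hdual2 : ∀ i : ℕ, 1 ≤ i → i ≤ n → i ≠ (n + 1) / 2 → dualDistDistr n Z i = 0) :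
    disc n Z = (n : ℝ) / 2 ^ n * Nat.choose (n - 1) ((n - 1) / 2) := by
  classical
  have h2m : 2 ^ m = 2 * 2 ^ (m - 1) := by
    rw [← pow_succ']
    congr 1
    omega
  have h4 : 2 ≤ 2 ^ (m - 1) := by
    calc 2 = 2 ^ 1 := by norm_num
    _ ≤ 2 ^ (m - 1) := Nat.pow_le_pow_right (by norm_num) (by omega)
  set M := 2 ^ (m - 1) - 1 with hM
  have hnM : n = 2 * M + 1 := by omega
  have hw : (n + 1) / 2 = M + 1 := by omega
  have hM1le : M + 1 ≤ n := by omega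
  have hNne : (Z.card : ℝ) ≠ 0 := by rw [hN]; positivity
  have h2n : ((2 : ℝ) ^ n) ≠ 0 := by positivity
  set τ : (Fin n → Bool) → ℝ := fun S =>
    (Z.card : ℝ)⁻¹ * (sigmaZ Z S : ℝ) - ((2 : ℝ) ^ n)⁻¹ * (sigmaZ Finset.univ S : ℝ) with hτ
  have hF : ∀ (t : ℕ) (x : Fin n → Bool),
      (Z.card : ℝ)⁻¹ * ((Z.filter (fun z => hammingDist x z ≤ t)).card : ℝ)
        - ((2 : ℝ) ^ n)⁻¹ *
            ((Finset.univ.filter (fun z : Fin n → Bool => hammingDist x z ≤ t)).card : ℝ)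
      = ∑ S : Fin n → Bool,
          (((2 : ℝ) ^ n)⁻¹ * (Gk n t (wtB S) : ℝ) * τ S) * (chZ S x : ℝ) := by
    intro t x
    rw [card_ballR Z x t, card_ballR Finset.univ x t]
    simp only [Finset.mul_sum]
    rw [← Finset.sum_sub_distrib]
    apply Finset.sum_congr rfl; intro S _
    simp only [hτ]
    ring
  have hdisc : disc n Z = ((2 : ℝ) ^ n)⁻¹ *
      ∑ S : Fin n → Bool,
        (∑ t ∈ Finset.range (n + 1), ((Gk n t (wtB S) : ℝ)) ^ 2) * τ S ^ 2 := by
    unfold disc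
    calc ∑ t ∈ Finset.range (n + 1), ∑ x : Fin n → Bool,
          ((Z.card : ℝ)⁻¹ * ((Z.filter (fun z => hammingDist x z ≤ t)).card : ℝ)
            - ((2 : ℝ) ^ n)⁻¹ *
                ((Finset.univ.filter (fun z : Fin n → Bool => hammingDist x z ≤ t)).card : ℝ)) ^ 2
        = ∑ t ∈ Finset.range (n + 1), ∑ x : Fin n → Bool,
            (∑ S : Fin n → Bool,
              (((2 : ℝ) ^ n)⁻¹ * (Gk n t (wtB S) : ℝ) * τ S) * (chZ S x : ℝ)) ^ 2 := by
          apply Finset.sum_congr rfl; intro t _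
          apply Finset.sum_congr rfl; intro x _
          rw [hF t x]
      _ = ∑ t ∈ Finset.range (n + 1), 2 ^ n * ∑ S : Fin n → Bool,
            (((2 : ℝ) ^ n)⁻¹ * (Gk n t (wtB S) : ℝ) * τ S) ^ 2 := by
          apply Finset.sum_congr rfl; intro t _
          exact parseval (fun S => ((2 : ℝ) ^ n)⁻¹ * (Gk n t (wtB S) : ℝ) * τ S)
      _ = ((2 : ℝ) ^ n)⁻¹ * ∑ S : Fin n → Bool,
            (∑ t ∈ Finset.range (n + 1), ((Gk n t (wtB S) : ℝ)) ^ 2) * τ S ^ 2 := by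
          simp only [Finset.mul_sum]
          rw [Finset.sum_comm]
          apply Finset.sum_congr rfl; intro S _
          rw [Finset.sum_mul, Finset.mul_sum]
          apply Finset.sum_congr rfl; intro t _
          field_simp
  have hfib : ∑ S : Fin n → Bool,
        (∑ t ∈ Finset.range (n + 1), ((Gk n t (wtB S) : ℝ)) ^ 2) * τ S ^ 2
      = ∑ w ∈ Finset.range (n + 1),
          ∑ S ∈ Finset.univ.filter (fun S : Fin n → Bool => wtB S = w),
            (∑ t ∈ Finset.range (n + 1), ((Gk n t w : ℝ)) ^ 2) * τ S ^ 2 := by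
    rw [← Finset.sum_fiberwise_of_maps_to
      (fun S _ => Finset.mem_range.mpr (Nat.lt_succ_of_le (wtB_le S)))
      (fun S => (∑ t ∈ Finset.range (n + 1), ((Gk n t (wtB S) : ℝ)) ^ 2) * τ S ^ 2)]
    apply Finset.sum_congr rfl; intro w _
    apply Finset.sum_congr rfl; intro S hS
    rw [Finset.mem_filter] at hS
    rw [hS.2]
  have hdualw : ∀ w : ℕ, 1 ≤ w → w ≤ n →
      ∑ S ∈ Finset.univ.filter (fun S : Fin n → Bool => wtB S = w), τ S ^ 2
        = dualDistDistr n Z w := by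
    intro w hw1 hwn
    have hτS : ∀ S ∈ Finset.univ.filter (fun S : Fin n → Bool => wtB S = w),
        τ S ^ 2 = ((Z.card : ℝ)⁻¹ * (Z.card : ℝ)⁻¹) * ((sigmaZ Z S : ℝ)) ^ 2 := by
      intro S hS
      rw [Finset.mem_filter] at hS
      have hS0 : S ≠ (fun _ => false) := by
        intro h
        have h0 : wtB S = 0 := (wtB_eq_zero_iff S).mpr h
        omega
      simp only [hτ]
      rw [sigmaZ_univ, if_neg hS0]
      push_cast
      ring
    rw [Finset.sum_congr rfl hτS, ← Finset.mul_sum]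
    unfold dualDistDistr distDistr
    have hd : ∑ i ∈ Finset.range (n + 1), (kraw n w i : ℝ) *
        ((Z.card : ℝ)⁻¹ * (((Z ×ˢ Z).filter (fun p => hammingDist p.1 p.2 = i)).card : ℝ))
      = (Z.card : ℝ)⁻¹ * ((∑ i ∈ Finset.range (n + 1), kraw n w i *
          ((((Z ×ˢ Z).filter (fun p => hammingDist p.1 p.2 = i)).card : ℤ)) : ℤ) : ℝ) := by
      push_cast
      rw [Finset.mul_sum]
      apply Finset.sum_congr rfl; intro i _
      ring
    rw [hd, dual_sigmaZ Z w]
    push_cast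
    rw [← mul_assoc, Finset.mul_sum]
  have hzero : ∀ w ∈ Finset.range (n + 1), w ≠ M + 1 →
      ∑ S ∈ Finset.univ.filter (fun S : Fin n → Bool => wtB S = w),
        (∑ t ∈ Finset.range (n + 1), ((Gk n t w : ℝ)) ^ 2) * τ S ^ 2 = 0 := by
    intro w hwmem hwne
    rw [Finset.mem_range] at hwmem
    rcases Nat.eq_zero_or_pos w with h0 | h1
    · apply Finset.sum_eq_zero
      intro S hS
      rw [Finset.mem_filter] at hS
      have hS0 : S = (fun _ => false) := (wtB_eq_zero_iff S).mp (by omega)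
      have hτ0 : τ S = 0 := by
        simp only [hτ, hS0]
        rw [sigmaZ_zero, sigmaZ_univ, if_pos rfl]
        push_cast
        rw [inv_mul_cancel₀ hNne, inv_mul_cancel₀ h2n]
        ring
      rw [hτ0]
      ring
    · rw [← Finset.mul_sum, hdualw w h1 (by omega),
        hdual2 w h1 (by omega) (by omega), mul_zero]
  have hmem : (M + 1) ∈ Finset.range (n + 1) := Finset.mem_range.mpr (by omega)
  have hH : ∑ t ∈ Finset.range (n + 1), ((Gk n t (M + 1) : ℝ)) ^ 2
      = (((2 * M).choose M : ℕ) : ℝ) := by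
    have h := middle_sq_sum (n := n) M hnM
    have := congrArg (Int.cast : ℤ → ℝ) h
    push_cast at this
    convert this using 2
  have hdual1' : dualDistDistr n Z (M + 1) = (n : ℝ) := by rw [← hw]; exact hdual1
  rw [hdisc, hfib, Finset.sum_eq_single (M + 1) hzero (fun h => absurd hmem h)]
  rw [← Finset.mul_sum, hdualw (M + 1) (by omega) hM1le, hdual1', hH]
  have e1 : n - 1 = 2 * M := by omega
  have e2 : (n - 1) / 2 = M := by omega
  rw [e2, e1]
  field_simp
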